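/- Every independent set in the strong power C_5^n that is an F_5-linear subspace of F_5^n has size at most 5^{n/2}. Hence the linear Shannon capacity of C_5 satisfies Θ_lin(C_5) ≤ √5. -/

import Mathlib

open SimpleGraph MvPolynomial

/-- The `n`-th strong power of a graph `G`: vertices are `n`-tuples, and two distinct
tuples are adjacent iff in every coordinate the entries are equal or adjacent in `G`. -/
def strongPow {V : Type*} (G : SimpleGraph V) (n : ℕ) : SimpleGraph (Fin n → V) where
  Adj x y := x ≠ y ∧ ∀ i, x i = y i ∨ G.Adj (x i) (y i)
  symm := by
    constructor
    rintro x y ⟨hne, h⟩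
    exact ⟨hne.symm, fun i => (h i).imp Eq.symm (fun hadj => hadj.symm)⟩
  loopless := by
    constructor
    rintro x ⟨hne, -⟩
    exact hne rfl

/-- The Cayley graph on the additive group of a field `F` with connection set `S`:
`u ~ v` iff `u ≠ v` and `u - v ∈ S` (symmetrized; for symmetric `S` this is `u - v ∈ S`). -/
def cayley {F : Type*} [Field F] (S : Set F) : SimpleGraph F where
  Adj u v := u ≠ v ∧ (u - v ∈ S ∨ v - u ∈ S)
  symm := by
    constructor
    rintro u v ⟨hne, h⟩
    exact ⟨hne.symm, h.symm⟩
  loopless := by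
    constructor
    rintro u ⟨hne, -⟩
    exact hne rfl

/-- A set `I` is independent in `G` if no two of its elements are adjacent. -/
def IsIndep {V : Type*} (G : SimpleGraph V) (I : Set V) : Prop :=
  ∀ x ∈ I, ∀ y ∈ I, ¬ G.Adj x y

/-- The linear independence number of the `n`-th strong power of a graph on `F`:
the largest size of an independent set which is an `F`-linear subspace of `F^n`. -/
noncomputable def alphaLin {F : Type*} [Field F] [Fintype F] (G : SimpleGraph F) (n : ℕ) : ℕ :=
  sSup {c | ∃ W : Submodule F (Fin n → F),
    IsIndep (strongPow G n) (W : Set (Fin n → F)) ∧ Nat.card W = c}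

instance : Fact (Nat.Prime 5) := ⟨by norm_num⟩

lemma key (n : ℕ) (W : Submodule (ZMod 5) (Fin n → ZMod 5))
    (hW : IsIndep (strongPow (cayley ({1, 4} : Set (ZMod 5))) n) (W : Set (Fin n → ZMod 5))) :
    2 * Module.finrank (ZMod 5) W ≤ n := by
  by_contra hlt
  push_neg at hlt
  set d := Module.finrank (ZMod 5) W with hd
  have hcoord : ∀ w ∈ W, w ≠ 0 → ∃ i, (w i) ^ 2 = -1 := by
    intro w hw hw0
    have hna := hW w hw 0 W.zero_mem
    have h2 : ¬ ∀ i, w i = 0 ∨ (cayley ({1, 4} : Set (ZMod 5))).Adj (w i) 0 := by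
      intro h
      exact hna ⟨hw0, fun i => by simpa using h i⟩
    push_neg at h2
    obtain ⟨i, hi0, hiadj⟩ := h2
    refine ⟨i, ?_⟩
    have hn : ¬ ((w i ≠ 0) ∧ (w i - 0 ∈ ({1, 4} : Set (ZMod 5)) ∨
        0 - w i ∈ ({1, 4} : Set (ZMod 5)))) := hiadj
    simp only [Set.mem_insert_iff, Set.mem_singleton_iff, sub_zero, zero_sub, not_and_or,
      not_or, not_ne_iff] at hn
    rcases hn with h | ⟨⟨h1, h4⟩, -⟩
    · exact absurd h hi0
    · revert hi0 h1 h4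
      generalize w i = a
      revert a
      decide
  let b := Module.finBasis (ZMod 5) W
  let L : (Fin d → ZMod 5) →ₗ[ZMod 5] (Fin n → ZMod 5) :=
    W.subtype ∘ₗ b.equivFun.symm.toLinearMap
  have hLmem : ∀ z, L z ∈ W := fun z => SetLike.coe_mem _
  have hLne : ∀ z : Fin d → ZMod 5, z ≠ 0 → L z ≠ 0 := by
    intro z hz h0
    apply hz
    have h2 : b.equivFun.symm z = 0 := Subtype.ext h0
    exact b.equivFun.symm.map_eq_zero_iff.mp h2
  have hL0 : L 0 = 0 := map_zero L
  -- the polynomial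
  let ℓ : Fin n → MvPolynomial (Fin d) (ZMod 5) :=
    fun i => ∑ j : Fin d, C (L (fun k => if j = k then 1 else 0) i) * X j
  let p : MvPolynomial (Fin d) (ZMod 5) := ∏ i : Fin n, ((ℓ i) ^ 2 + 1)
  have heval : ∀ z, eval z p = ∏ i : Fin n, ((L z i) ^ 2 + 1) := by
    intro z
    have hℓ : ∀ i, eval z (ℓ i) = L z i := by
      intro i
      have := LinearMap.pi_apply_eq_sum_univ L z
      simp only [ℓ, map_sum, map_mul, eval_C, eval_X]
      rw [this]
      simp [Finset.sum_apply, mul_comm]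
    simp [p, hℓ]
  have hdeg : p.totalDegree ≤ 2 * n := by
    calc p.totalDegree ≤ ∑ i : Fin n, ((ℓ i) ^ 2 + 1).totalDegree :=
          totalDegree_finset_prod _ _
    _ ≤ ∑ i : Fin n, 2 := by
        apply Finset.sum_le_sum
        intro i _
        calc ((ℓ i) ^ 2 + 1).totalDegree ≤ max ((ℓ i) ^ 2).totalDegree (1 : MvPolynomial (Fin d) (ZMod 5)).totalDegree :=
              totalDegree_add _ _
        _ ≤ 2 := by
            rw [totalDegree_one]
            simp only [max_le_iff]
            constructor
            · calc ((ℓ i) ^ 2).totalDegree ≤ 2 * (ℓ i).totalDegree := totalDegree_pow _ _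
              _ ≤ 2 * 1 := by
                  apply Nat.mul_le_mul_left
                  calc (ℓ i).totalDegree ≤ Finset.univ.sup
                        (fun j => (C (L (fun k => if j = k then 1 else 0) i) * X j).totalDegree) :=
                        totalDegree_finset_sum _ _
                  _ ≤ 1 := by
                      apply Finset.sup_le
                      intro j _
                      calc (C (L (fun k => if j = k then 1 else 0) i) * X j).totalDegree ≤
                            (C (L (fun k => if j = k then 1 else 0) i)).totalDegree + (X j : MvPolynomial (Fin d) (ZMod 5)).totalDegree :=
                            totalDegree_mul _ _
                      _ ≤ 1 := by rw [totalDegree_C, totalDegree_X]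
              _ = 2 := by norm_num
            · norm_num
    _ = 2 * n := by simp [Finset.sum_const, mul_comm]
  have hsum0 : ∑ z : Fin d → ZMod 5, eval z p = 0 := by
    apply MvPolynomial.sum_eval_eq_zero
    have : (Fintype.card (ZMod 5) - 1) * Fintype.card (Fin d) = 4 * d := by
      simp [ZMod.card]
    rw [this]
    omega
  have hsum1 : ∑ z : Fin d → ZMod 5, eval z p = 1 := by
    rw [Finset.sum_eq_single_of_mem (0 : Fin d → ZMod 5) (Finset.mem_univ _)]
    · rw [heval]
      apply Finset.prod_eq_one
      intro i _
      rw [hL0]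
      norm_num
    · intro z _ hz
      rw [heval]
      obtain ⟨i, hi⟩ := hcoord (L z) (hLmem z) (hLne z hz)
      apply Finset.prod_eq_zero (Finset.mem_univ i)
      rw [hi]
      ring
  rw [hsum0] at hsum1
  exact one_ne_zero hsum1.symm

lemma cardbound (n : ℕ) (W : Submodule (ZMod 5) (Fin n → ZMod 5))
    (hW : IsIndep (strongPow (cayley ({1, 4} : Set (ZMod 5))) n) (W : Set (Fin n → ZMod 5))) :
    (Nat.card W : ℝ) ≤ (5 : ℝ) ^ ((n : ℝ) / 2) := by
  have h2d := key n W hW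
  set d := Module.finrank (ZMod 5) W with hd
  haveI : Fintype W := Fintype.ofFinite _
  have hcard : Nat.card W = 5 ^ d := by
    rw [Nat.card_eq_fintype_card, Module.card_eq_pow_finrank (K := ZMod 5), ZMod.card]
  rw [hcard]
  push_cast
  rw [← Real.rpow_natCast (5 : ℝ) d]
  apply Real.rpow_le_rpow_of_exponent_le (by norm_num)
  have : (2 * d : ℕ) ≤ (n : ℕ) := h2d
  have : ((2 * d : ℕ) : ℝ) ≤ (n : ℝ) := Nat.cast_le.mpr this
  push_cast at this
  linarith

theorem stmt9 :
    (∀ n : ℕ, ∀ W : Submodule (ZMod 5) (Fin n → ZMod 5),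
      IsIndep (strongPow (cayley ({1, 4} : Set (ZMod 5))) n) (W : Set (Fin n → ZMod 5)) →
      (Nat.card W : ℝ) ≤ (5 : ℝ) ^ ((n : ℝ) / 2)) ∧
    (⨆ n : ℕ, ((alphaLin (cayley ({1, 4} : Set (ZMod 5))) (n + 1) : ℝ) ^
        ((1 : ℝ) / ((n : ℝ) + 1)))) ≤ Real.sqrt 5 := by
  constructor
  · exact cardbound
  · apply ciSup_le
    intro n
    set G := cayley ({1, 4} : Set (ZMod 5))
    set S : Set ℕ := {c | ∃ W : Submodule (ZMod 5) (Fin (n+1) → ZMod 5),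
      IsIndep (strongPow G (n+1)) (W : Set (Fin (n+1) → ZMod 5)) ∧ Nat.card W = c} with hS
    have hne : S.Nonempty := by
      refine ⟨1, ⊥, ?_, ?_⟩
      · intro x hx y hy hadj
        simp only [Submodule.bot_coe, Set.mem_singleton_iff] at hx hy
        exact hadj.1 (hx.trans hy.symm)
      · simp [Nat.card_eq_fintype_card]
    have hbdd : BddAbove S := by
      refine ⟨Nat.card (Fin (n+1) → ZMod 5), ?_⟩
      rintro c ⟨W, -, rfl⟩
      exact Nat.card_le_card_of_injective _ W.injective_subtype
    have hmem : alphaLin G (n+1) ∈ S := Nat.sSup_mem hne hbdd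
    obtain ⟨W, hWind, hWcard⟩ := hmem
    have h1 : ((alphaLin G (n+1) : ℕ) : ℝ) ≤ (5 : ℝ) ^ (((n : ℝ) + 1) / 2) := by
      rw [← hWcard]
      have := cardbound (n+1) W hWind
      push_cast at this ⊢
      exact this
    have ha : (0 : ℝ) ≤ ((alphaLin G (n+1) : ℕ) : ℝ) := Nat.cast_nonneg _
    have he : (0 : ℝ) ≤ (1 : ℝ) / ((n : ℝ) + 1) := by positivity
    calc ((alphaLin G (n+1) : ℕ) : ℝ) ^ ((1 : ℝ) / ((n : ℝ) + 1)) ≤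
          ((5 : ℝ) ^ (((n : ℝ) + 1) / 2)) ^ ((1 : ℝ) / ((n : ℝ) + 1)) :=
          Real.rpow_le_rpow ha h1 he
    _ = (5 : ℝ) ^ ((((n : ℝ) + 1) / 2) * ((1 : ℝ) / ((n : ℝ) + 1))) := by
        rw [← Real.rpow_mul (by norm_num)]
    _ = (5 : ℝ) ^ ((1 : ℝ) / 2) := by
        congr 1
        have hn : (n : ℝ) + 1 ≠ 0 := by positivity
        field_simp
    _ = Real.sqrt 5 := by
        rw [Real.sqrt_eq_rpow]
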